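/- Let Δ be a d-dimensional orientable pseudomanifold without boundary with s facets and facet-ridge graph G. Then (1) the symmetric homology polytope P_Δ is unimodularly equivalent to the symmetric edge polytope of the cycle C_s, and (2) the symmetric cohomology polytope P^Δ is unimodularly equivalent to the symmetric edge polytope of G. -/

import Mathlib

open Matrix BigOperators Pointwise

/-- An abstract simplicial complex on vertex set `Fin n`. -/
structure SC (n : ℕ) where
  faces : Finset (Finset (Fin n))
  down_closed : ∀ σ ∈ faces, ∀ τ, τ ⊆ σ → τ.Nonempty → τ ∈ faces
  face_nonempty : ∀ σ ∈ faces, σ.Nonempty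

namespace SC

variable {n : ℕ}

/-- `K` is `d`-dimensional. -/
def dimIs (K : SC n) (d : ℕ) : Prop :=
  (∀ σ ∈ K.faces, σ.card ≤ d + 1) ∧ ∃ σ ∈ K.faces, σ.card = d + 1

/-- `K` is pure of dimension `d`. -/
def pure (K : SC n) (d : ℕ) : Prop :=
  ∀ σ ∈ K.faces, ∃ τ ∈ K.faces, σ ⊆ τ ∧ τ.card = d + 1

/-- The `j`-dimensional faces of `K`. -/
abbrev fdex (K : SC n) (j : ℕ) : Type := {σ : Finset (Fin n) // σ ∈ K.faces ∧ σ.card = j + 1}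

end SC

/-- Entry of the simplicial boundary matrix: for a codimension-one subface `τ ⊆ σ`,
the sign `(-1)^k` where `k` is the position of the vertex removed from `σ`. -/
def bEntry {n : ℕ} (τ σ : Finset (Fin n)) : ℤ :=
  if τ ⊆ σ ∧ σ.card = τ.card + 1 then
    ∑ v ∈ σ \ τ, (-1 : ℤ) ^ ((σ.filter fun w => w < v).card)
  else 0

/-- The boundary matrix from `(j+1)`-dimensional faces to `j`-dimensional faces,
i.e. the boundary map `∂_{j+2}`… no: `K.B j` is the map `∂` whose columns are indexed
by the `(j+1)`-faces; in homological notation `K.B (d-1)` is `∂_d`. -/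
def SC.B {n : ℕ} (K : SC n) (j : ℕ) : Matrix (K.fdex j) (K.fdex (j + 1)) ℤ :=
  fun τ σ => bEntry τ.1 σ.1

/-- Strong connectivity of a `(j+1)`-dimensional pure complex: any two facets are
connected by a chain of facets successively sharing a ridge. -/
def SC.StronglyConnected {n : ℕ} (K : SC n) (j : ℕ) : Prop :=
  ∀ a b : K.fdex (j + 1),
    Relation.ReflTransGen (fun σ σ' : K.fdex (j + 1) => (σ.1 ∩ σ'.1).card = j + 1) a b

/-- the number of facets (of a `(j+1)`-dimensional complex) containing a given ridge -/
def SC.ridgeDeg {n : ℕ} (K : SC n) (j : ℕ) (τ : K.fdex j) : ℕ :=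
  (Finset.univ.filter fun σ : K.fdex (j + 1) => τ.1 ⊆ σ.1).card

section Poly

variable {ι κ : Type*} [Fintype ι] [Fintype κ]

def dot (x y : ι → ℝ) : ℝ := ∑ i, x i * y i

/-- the columns of `A` and their negatives, as real vectors -/
def colsPM (A : Matrix ι κ ℤ) : Set (ι → ℝ) :=
  {x | ∃ j : κ, x = (fun i => (A i j : ℝ)) ∨ x = fun i => -(A i j : ℝ)}

/-- the centrally symmetric polytope `conv [A | -A]` -/
def symPoly (A : Matrix ι κ ℤ) : Set (ι → ℝ) := convexHull ℝ (colsPM A)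

def intVec (x : ι → ℝ) : Prop := ∀ i, ∃ z : ℤ, x i = (z : ℝ)

def latticePts (P : Set (ι → ℝ)) : Set (ι → ℝ) := {x ∈ P | intVec x}

/-- a set is a lattice polytope iff it is the convex hull of its lattice points -/
def IsLatticePolytope (Q : Set (ι → ℝ)) : Prop := Q = convexHull ℝ (latticePts Q)

/-- the polar dual, taken within the linear span of `P` -/
def polarIn (P : Set (ι → ℝ)) : Set (ι → ℝ) :=
  {y | y ∈ Submodule.span ℝ P ∧ ∀ x ∈ P, dot x y ≤ 1}

/-- `P` is reflexive: its polar dual (within the affine hull of `P`) is a lattice polytope -/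
def IsReflexive (P : Set (ι → ℝ)) : Prop := IsLatticePolytope (polarIn P)

/-- every lattice point of the span of `P` is an integer combination of lattice points of `P` -/
def IsSpanning (P : Set (ι → ℝ)) : Prop :=
  ∀ x : ι → ℝ, intVec x → x ∈ Submodule.span ℝ P →
    x ∈ (Submodule.span ℤ (latticePts P) : Set (ι → ℝ))

/-- the integer decomposition property -/
def IsIDP (P : Set (ι → ℝ)) : Prop :=
  ∀ k : ℕ, ∀ x : ι → ℝ, intVec x → x ∈ (k : ℝ) • P →
    ∃ f : Fin k → (ι → ℝ), (∀ i, f i ∈ latticePts P) ∧ x = ∑ i, f i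

/-- combinatorial equivalence: an inclusion-order isomorphism between the
posets of exposed faces -/
def CombEquiv (P : Set (ι → ℝ)) (Q : Set (κ → ℝ)) : Prop :=
  Nonempty ({F : Set (ι → ℝ) // IsExposed ℝ P F} ≃o {F : Set (κ → ℝ) // IsExposed ℝ Q F})

/-- unimodular equivalence: an affine isomorphism between the affine hulls which
matches up the two polytopes and the lattice points of the affine hulls -/
def UniEquiv (P : Set (ι → ℝ)) (Q : Set (κ → ℝ)) : Prop :=
  ∃ f : (ι → ℝ) →ᵃ[ℝ] (κ → ℝ),
    Set.BijOn f (affineSpan ℝ P : Set (ι → ℝ)) (affineSpan ℝ Q : Set (κ → ℝ)) ∧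
    f '' P = Q ∧
    (∀ x ∈ (affineSpan ℝ P : Set (ι → ℝ)), intVec x → intVec (f x)) ∧
    (∀ y ∈ (affineSpan ℝ Q : Set (κ → ℝ)), intVec y →
      ∃ x ∈ (affineSpan ℝ P : Set (ι → ℝ)), intVec x ∧ f x = y)

/-- the facets of a polytope: the maximal proper exposed faces -/
def polyFacets (P : Set (ι → ℝ)) : Set (Set (ι → ℝ)) :=
  {F | IsExposed ℝ P F ∧ F ⊂ P ∧ ∀ G, IsExposed ℝ P G → F ⊆ G → G ⊂ P → G = F}

/-- independence of a set of columns of a rational matrix -/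
def colsIndep (A : Matrix ι κ ℚ) (S : Set κ) : Prop :=
  LinearIndependent ℚ (fun j : S => (fun i => A i (j : κ)))

/-- `S` is a basis of the column matroid `M[A]` -/
def IsBasisSet (A : Matrix ι κ ℚ) (S : Set κ) : Prop :=
  colsIndep A S ∧ ∀ S' : Set κ, S ⊆ S' → colsIndep A S' → S' = S

end Poly

/-- the standard cross-polytope -/
def stdCross (s : ℕ) : Set (Fin s → ℝ) :=
  convexHull ℝ {x | ∃ i : Fin s, x = Pi.single i 1 ∨ x = Pi.single i (-1)}

/-- a signed incidence matrix of the cycle on `n` vertices: column `j` is `e_{j+1} - e_j` -/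
def cycMat (n : ℕ) : Matrix (Fin n) (Fin n) ℤ :=
  fun i j => (if (i : ℕ) = ((j : ℕ) + 1) % n then 1 else 0) - (if i = j then 1 else 0)

/-- a signed incidence matrix of the facet-ridge graph of a `(j+1)`-dimensional
pseudomanifold without boundary: rows are facets, columns are ridges, and the two
facets containing a ridge receive opposite signs. -/
noncomputable def SC.frg {n : ℕ} (K : SC n) (j : ℕ) :
    Matrix (K.fdex (j + 1)) (K.fdex j) ℤ :=
  fun σ τ =>
    if τ.1 ⊆ σ.1 then
      (if ∀ σ' : K.fdex (j + 1), τ.1 ⊆ σ'.1 → σ' ≠ σ →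
          (σ'.1 \ τ.1).min ≤ (σ.1 \ τ.1).min then 1 else -1)
    else 0

section Aux
variable {n j : ℕ} {K : SC n}

lemma bEntry_zero {τ σ : Finset (Fin n)} (h : ¬ τ ⊆ σ) : bEntry τ σ = 0 := by
  rw [bEntry, if_neg]; tauto

lemma sdiff_singleton (τ : K.fdex j) (σ : K.fdex (j+1)) (h : τ.1 ⊆ σ.1) :
    ∃ v, σ.1 \ τ.1 = {v} := by
  rw [← Finset.card_eq_one, Finset.card_sdiff_of_subset h, σ.2.2, τ.2.2]
  omega

lemma bEntry_pm (τ : K.fdex j) (σ : K.fdex (j+1)) (h : τ.1 ⊆ σ.1) :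
    bEntry τ.1 σ.1 = 1 ∨ bEntry τ.1 σ.1 = -1 := by
  obtain ⟨v, hv⟩ := sdiff_singleton τ σ h
  rw [bEntry, if_pos ⟨h, by rw [σ.2.2, τ.2.2]⟩, hv, Finset.sum_singleton]
  rcases Nat.even_or_odd ((σ.1.filter fun w => w < v).card) with he | ho
  · exact Or.inl he.neg_one_pow
  · exact Or.inr ho.neg_one_pow

lemma two_facets (hclosed : ∀ τ : K.fdex j, K.ridgeDeg j τ = 2) (τ : K.fdex j) :
    ∃ σ1 σ2 : K.fdex (j+1), σ1 ≠ σ2 ∧ τ.1 ⊆ σ1.1 ∧ τ.1 ⊆ σ2.1 ∧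
      ∀ σ : K.fdex (j+1), τ.1 ⊆ σ.1 → σ = σ1 ∨ σ = σ2 := by
  have h2 := hclosed τ
  rw [SC.ridgeDeg, Finset.card_eq_two] at h2
  obtain ⟨σ1, σ2, hne, hf⟩ := h2
  have h1 : σ1 ∈ Finset.univ.filter fun σ : K.fdex (j+1) => τ.1 ⊆ σ.1 := by
    rw [hf]; simp
  have h2' : σ2 ∈ Finset.univ.filter fun σ : K.fdex (j+1) => τ.1 ⊆ σ.1 := by
    rw [hf]; simp
  refine ⟨σ1, σ2, hne, (Finset.mem_filter.1 h1).2, (Finset.mem_filter.1 h2').2, fun σ hσ => ?_⟩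
  have : σ ∈ Finset.univ.filter fun σ : K.fdex (j+1) => τ.1 ⊆ σ.1 :=
    Finset.mem_filter.2 ⟨Finset.mem_univ _, hσ⟩
  rw [hf, Finset.mem_insert, Finset.mem_singleton] at this
  exact this

lemma row_two (hclosed : ∀ τ : K.fdex j, K.ridgeDeg j τ = 2) (τ : K.fdex j)
    {σ1 σ2 : K.fdex (j+1)} (h1 : τ.1 ⊆ σ1.1) (h2 : τ.1 ⊆ σ2.1) (hne : σ1 ≠ σ2)
    (w : K.fdex (j+1) → ℝ) :
    ∑ σ, (K.B j τ σ : ℝ) * w σ =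
      (bEntry τ.1 σ1.1 : ℝ) * w σ1 + (bEntry τ.1 σ2.1 : ℝ) * w σ2 := by
  obtain ⟨σ1', σ2', hne', h1', h2', hall⟩ := two_facets hclosed τ
  have hzero : ∀ σ : K.fdex (j+1), σ ≠ σ1 → σ ≠ σ2 → (K.B j τ σ : ℝ) * w σ = 0 := by
    intro σ hσ1 hσ2
    have : ¬ τ.1 ⊆ σ.1 := by
      intro hsub
      rcases hall σ hsub with rfl | rfl <;> rcases hall σ1 h1 with rfl | rfl <;>
        rcases hall σ2 h2 with rfl | rfl <;> simp_all
    rw [show K.B j τ σ = 0 from bEntry_zero this]; simp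
  rw [← Finset.sum_subset (Finset.subset_univ {σ1, σ2})]
  · rw [Finset.sum_insert (by simpa using hne), Finset.sum_singleton]; rfl
  · intro σ _ hσ
    simp only [Finset.mem_insert, Finset.mem_singleton, not_or] at hσ
    exact hzero σ hσ.1 hσ.2

end Aux
section Aux2
variable {n j : ℕ} {K : SC n}

/-- an adjacency gives a ridge contained in both facets, with these the only two facets -/
lemma adj_ridge {σ σ' : K.fdex (j+1)} (h : (σ.1 ∩ σ'.1).card = j + 1) :
    ∃ τ : K.fdex j, τ.1 ⊆ σ.1 ∧ τ.1 ⊆ σ'.1 ∧ σ ≠ σ' := by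
  have hmem : σ.1 ∩ σ'.1 ∈ K.faces := by
    apply K.down_closed σ.1 σ.2.1 _ Finset.inter_subset_left
    rw [← Finset.card_pos, h]; omega
  refine ⟨⟨σ.1 ∩ σ'.1, hmem, h⟩, Finset.inter_subset_left, Finset.inter_subset_right, ?_⟩
  rintro rfl
  rw [Finset.inter_self] at h
  have := σ.2.2
  omega

/-- propagation along strong connectivity -/
lemma reach (hsc : K.StronglyConnected j) {P : K.fdex (j+1) → Prop}
    (step : ∀ σ σ' : K.fdex (j+1), (σ.1 ∩ σ'.1).card = j + 1 → P σ → P σ')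
    (σ0 : K.fdex (j+1)) (h0 : P σ0) : ∀ σ, P σ := by
  intro σ
  induction hsc σ0 σ with
  | refl => exact h0
  | tail _ hbc ih => exact step _ _ hbc ih

/-- the key local relation: for adjacent facets, a vector in the "row system" satisfies
`ε * w σ + ε' * w σ' = x τ` with `ε, ε' = ±1`. -/
lemma adj_rel (hclosed : ∀ τ : K.fdex j, K.ridgeDeg j τ = 2)
    {σ σ' : K.fdex (j+1)} (h : (σ.1 ∩ σ'.1).card = j + 1)
    (w : K.fdex (j+1) → ℝ) :
    ∃ (ε ε' : ℝ) (τ : K.fdex j), (ε = 1 ∨ ε = -1) ∧ (ε' = 1 ∨ ε' = -1) ∧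
      ε * w σ + ε' * w σ' = ∑ σ'', (K.B j τ σ'' : ℝ) * w σ'' := by
  obtain ⟨τ, h1, h2, hne⟩ := adj_ridge h
  refine ⟨(bEntry τ.1 σ.1 : ℝ), (bEntry τ.1 σ'.1 : ℝ), τ, ?_, ?_, ?_⟩
  · rcases bEntry_pm τ σ h1 with h | h <;> rw [h] <;> simp
  · rcases bEntry_pm τ σ' h2 with h | h <;> rw [h] <;> simp
  · rw [row_two hclosed τ h1 h2 hne w]

end Aux2
section Aux3
variable {n j : ℕ} {K : SC n}

/-- integrality propagates through the row system -/
lemma int_prop (hclosed : ∀ τ : K.fdex j, K.ridgeDeg j τ = 2) (hsc : K.StronglyConnected j)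
    (a : K.fdex (j+1) → ℝ)
    (hint : ∀ τ : K.fdex j, ∃ m : ℤ, ∑ σ, (K.B j τ σ : ℝ) * a σ = m)
    (σ0 : K.fdex (j+1)) (h0 : ∃ m : ℤ, a σ0 = m) : ∀ σ, ∃ m : ℤ, a σ = m := by
  refine reach hsc (P := fun σ => ∃ m : ℤ, a σ = m) ?_ σ0 h0
  intro σ σ' hadj ⟨m0, hm0⟩
  obtain ⟨ε, ε', τ, hε, hε', heq⟩ := adj_rel hclosed hadj a
  obtain ⟨mτ, hmτ⟩ := hint τ
  rw [hmτ] at heq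
  rcases hε with rfl | rfl <;> rcases hε' with rfl | rfl
  · exact ⟨mτ - m0, by push_cast; linarith⟩
  · exact ⟨m0 - mτ, by push_cast; linarith⟩
  · exact ⟨mτ + m0, by push_cast; linarith⟩
  · exact ⟨-(m0 + mτ), by push_cast; linarith⟩

/-- a vector in the kernel vanishing somewhere vanishes everywhere -/
lemma zero_prop (hclosed : ∀ τ : K.fdex j, K.ridgeDeg j τ = 2) (hsc : K.StronglyConnected j)
    (a : K.fdex (j+1) → ℝ)
    (hker : ∀ τ : K.fdex j, ∑ σ, (K.B j τ σ : ℝ) * a σ = 0)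
    (σ0 : K.fdex (j+1)) (h0 : a σ0 = 0) : ∀ σ, a σ = 0 := by
  refine reach hsc (P := fun σ => a σ = 0) ?_ σ0 h0
  intro σ σ' hadj hm0
  obtain ⟨ε, ε', τ, hε, hε', heq⟩ := adj_rel hclosed hadj a
  rw [hker τ, hm0] at heq
  rcases hε' with rfl | rfl <;> rcases hε with rfl | rfl <;> linarith

/-- a kernel vector has constant absolute value -/
lemma abs_const (hclosed : ∀ τ : K.fdex j, K.ridgeDeg j τ = 2) (hsc : K.StronglyConnected j)
    (a : K.fdex (j+1) → ℝ)
    (hker : ∀ τ : K.fdex j, ∑ σ, (K.B j τ σ : ℝ) * a σ = 0)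
    (σ0 : K.fdex (j+1)) : ∀ σ, |a σ| = |a σ0| := by
  refine reach hsc (P := fun σ => |a σ| = |a σ0|) ?_ σ0 rfl
  intro σ σ' hadj hm0
  obtain ⟨ε, ε', τ, hε, hε', heq⟩ := adj_rel hclosed hadj a
  rw [hker τ] at heq
  rw [← hm0]
  rcases hε' with rfl | rfl <;> rcases hε with rfl | rfl <;> rw [abs_eq_abs] <;>
    first | (left; linarith) | (right; linarith)

end Aux3
section Poly2
variable {ι κ : Type*}

lemma colsPM_neg {A : Matrix ι κ ℤ} {x : ι → ℝ} (h : x ∈ colsPM A) : -x ∈ colsPM A := by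
  obtain ⟨c, hc | hc⟩ := h
  · exact ⟨c, Or.inr (by rw [hc]; funext i; simp)⟩
  · exact ⟨c, Or.inl (by rw [hc]; funext i; simp)⟩

lemma span_symPoly (A : Matrix ι κ ℤ) [Nonempty κ] :
    (affineSpan ℝ (symPoly A) : Set (ι → ℝ)) = (Submodule.span ℝ (colsPM A) : Set (ι → ℝ)) := by
  rw [symPoly, affineSpan_convexHull]
  have hzero : (0 : ι → ℝ) ∈ affineSpan ℝ (colsPM A) := by
    obtain ⟨c⟩ := ‹Nonempty κ›
    have h1 : (fun i => (A i c : ℝ)) ∈ colsPM A := ⟨c, Or.inl rfl⟩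
    have h2 : (fun i => -(A i c : ℝ)) ∈ colsPM A := ⟨c, Or.inr rfl⟩
    have := (affineSpan ℝ (colsPM A)).smul_vsub_vadd_mem (1/2 : ℝ)
      (subset_affineSpan ℝ _ h1) (subset_affineSpan ℝ _ h2) (subset_affineSpan ℝ _ h2)
    convert this using 1
    funext i; simp [vsub_eq_sub]; ring
  apply Set.Subset.antisymm
  · have hle : affineSpan ℝ (colsPM A) ≤ (Submodule.span ℝ (colsPM A)).toAffineSubspace := by
      apply affineSpan_le.2
      exact Submodule.subset_span
    exact hle
  · intro x hx
    induction hx using Submodule.span_induction with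
    | mem y hy => exact subset_affineSpan ℝ _ hy
    | zero => exact hzero
    | add y z _ _ hy hz =>
      have := (affineSpan ℝ (colsPM A)).smul_vsub_vadd_mem (1 : ℝ) hy hzero hz
      convert this using 1
      simp [vsub_eq_sub]
    | smul a y _ hy =>
      have := (affineSpan ℝ (colsPM A)).smul_vsub_vadd_mem a hy hzero hzero
      convert this using 1
      simp [vsub_eq_sub]

end Poly2
section Aux5
variable {n j : ℕ} {K : SC n}

lemma frg_zero {σ : K.fdex (j+1)} {τ : K.fdex j} (h : ¬ τ.1 ⊆ σ.1) : K.frg j σ τ = 0 := by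
  rw [SC.frg, if_neg h]

lemma frg_spec {τ : K.fdex j} {σ1 σ2 : K.fdex (j+1)} (hne : σ1 ≠ σ2)
    (h1 : τ.1 ⊆ σ1.1) (h2 : τ.1 ⊆ σ2.1)
    (hall : ∀ σ : K.fdex (j+1), τ.1 ⊆ σ.1 → σ = σ1 ∨ σ = σ2) :
    (K.frg j σ1 τ = 1 ∧ K.frg j σ2 τ = -1) ∨ (K.frg j σ1 τ = -1 ∧ K.frg j σ2 τ = 1) := by
  obtain ⟨v1, hv1⟩ := sdiff_singleton τ σ1 h1
  obtain ⟨v2, hv2⟩ := sdiff_singleton τ σ2 h2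
  have hvne : v1 ≠ v2 := by
    rintro rfl
    apply hne
    have e1 : τ.1 ∪ σ1.1 \ τ.1 = σ1.1 := Finset.union_sdiff_of_subset h1
    have e2 : τ.1 ∪ σ2.1 \ τ.1 = σ2.1 := Finset.union_sdiff_of_subset h2
    apply Subtype.ext
    rw [← e1, ← e2, hv1, hv2]
  have hC1 : (∀ σ' : K.fdex (j + 1), τ.1 ⊆ σ'.1 → σ' ≠ σ1 →
      (σ'.1 \ τ.1).min ≤ (σ1.1 \ τ.1).min) ↔ (v2 : WithTop (Fin n)) ≤ v1 := by
    constructor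
    · intro h
      have := h σ2 h2 (Ne.symm hne)
      rwa [hv1, hv2, Finset.min_singleton, Finset.min_singleton] at this
    · intro h σ' hσ' hne'
      rcases hall σ' hσ' with rfl | rfl
      · exact absurd rfl hne'
      · rwa [hv1, hv2, Finset.min_singleton, Finset.min_singleton]
  have hC2 : (∀ σ' : K.fdex (j + 1), τ.1 ⊆ σ'.1 → σ' ≠ σ2 →
      (σ'.1 \ τ.1).min ≤ (σ2.1 \ τ.1).min) ↔ (v1 : WithTop (Fin n)) ≤ v2 := by
    constructor
    · intro h
      have := h σ1 h1 hne
      rwa [hv1, hv2, Finset.min_singleton, Finset.min_singleton] at this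
    · intro h σ' hσ' hne'
      rcases hall σ' hσ' with rfl | rfl
      · rwa [hv1, hv2, Finset.min_singleton, Finset.min_singleton]
      · exact absurd rfl hne'
  rcases le_total v1 v2 with hle | hle
  · right
    have hnlt : ¬ ((v2 : WithTop (Fin n)) ≤ v1) := by
      simp only [WithTop.coe_le_coe]
      exact fun h => hvne (le_antisymm hle h)
    constructor
    · rw [SC.frg, if_pos h1, if_neg (fun hc => hnlt (hC1.1 hc))]
    · rw [SC.frg, if_pos h2, if_pos (hC2.2 (WithTop.coe_le_coe.2 hle))]
  · left
    have hnlt : ¬ ((v1 : WithTop (Fin n)) ≤ v2) := by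
      simp only [WithTop.coe_le_coe]
      exact fun h => hvne (le_antisymm h hle)
    constructor
    · rw [SC.frg, if_pos h1, if_pos (hC1.2 (WithTop.coe_le_coe.2 hle))]
    · rw [SC.frg, if_pos h2, if_neg (fun hc => hnlt (hC2.1 hc))]

end Aux5
section Part2
variable {n j : ℕ} {K : SC n}

lemma part2 (hclosed : ∀ τ : K.fdex j, K.ridgeDeg j τ = 2)
    (sgn : K.fdex (j+1) → ℝ) (hsgn : ∀ σ, sgn σ = 1 ∨ sgn σ = -1)
    (hrow : ∀ (τ : K.fdex j) (σ1 σ2 : K.fdex (j+1)), τ.1 ⊆ σ1.1 → τ.1 ⊆ σ2.1 → σ1 ≠ σ2 →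
      sgn σ1 * (bEntry τ.1 σ1.1 : ℝ) + sgn σ2 * (bEntry τ.1 σ2.1 : ℝ) = 0)
    [Nonempty (K.fdex j)] :
    UniEquiv (symPoly (K.B j)ᵀ) (symPoly (K.frg j)) := by
  classical
  -- the diagonal sign map
  set f2 : (K.fdex (j+1) → ℝ) →ₗ[ℝ] (K.fdex (j+1) → ℝ) :=
    { toFun := fun x σ => sgn σ * x σ
      map_add' := fun x y => by funext σ; simp; ring
      map_smul' := fun c x => by funext σ; simp; ring } with hf2
  have hf2app : ∀ (x : K.fdex (j+1) → ℝ) σ, f2 x σ = sgn σ * x σ := fun x σ => rfl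
  have hinv : ∀ x, f2 (f2 x) = x := by
    intro x; funext σ
    rw [hf2app, hf2app]
    rcases hsgn σ with h | h <;> rw [h] <;> ring
  -- pointwise column identification
  have key : ∀ τ : K.fdex j, ∃ η : ℝ, (η = 1 ∨ η = -1) ∧
      f2 (fun σ => ((K.B j)ᵀ σ τ : ℝ)) = fun σ => η * (K.frg j σ τ : ℝ) := by
    intro τ
    obtain ⟨σ1, σ2, hne, h1, h2, hall⟩ := two_facets hclosed τ
    have hε1 := bEntry_pm τ σ1 h1
    have hε2 := bEntry_pm τ σ2 h2
    have hg := frg_spec hne h1 h2 hall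
    have hr := hrow τ σ1 σ2 h1 h2 hne
    refine ⟨sgn σ1 * (bEntry τ.1 σ1.1 : ℝ) * (K.frg j σ1 τ : ℝ), ?_, ?_⟩
    · rcases hsgn σ1 with e1 | e1 <;> rcases hε1 with e2 | e2 <;> rcases hg with ⟨e3, _⟩ | ⟨e3, _⟩ <;>
        rw [e1, e2, e3] <;> norm_num
    · funext σ
      simp only [hf2app, Matrix.transpose_apply, SC.B]
      by_cases hc1 : σ = σ1
      · rw [hc1]
        rcases hg with ⟨e3, _⟩ | ⟨e3, _⟩ <;> rw [e3] <;> push_cast <;> ring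
      · by_cases hc2 : σ = σ2
        · rw [hc2]
          rcases hg with ⟨e3, e4⟩ | ⟨e3, e4⟩ <;> rw [e3, e4] <;> push_cast <;> nlinarith [hr]
        · have hnsub : ¬ τ.1 ⊆ σ.1 := by
            intro hsub
            rcases hall σ hsub with rfl | rfl <;> simp_all
          rw [bEntry_zero hnsub, frg_zero hnsub]
          norm_num
  -- image of the generators
  have himg : f2 '' colsPM (K.B j)ᵀ = colsPM (K.frg j) := by
    apply Set.Subset.antisymm
    · rintro x ⟨y, ⟨τ, hy | hy⟩, rfl⟩
      · obtain ⟨η, hη, hkey⟩ := key τ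
        subst hy
        rw [hkey]
        rcases hη with rfl | rfl
        · exact ⟨τ, Or.inl (by funext σ; norm_num)⟩
        · exact ⟨τ, Or.inr (by funext σ; norm_num)⟩
      · obtain ⟨η, hη, hkey⟩ := key τ
        have hyneg : y = -(fun σ => ((K.B j)ᵀ σ τ : ℝ)) := by
          rw [hy]; funext σ; simp
        subst hyneg
        rw [map_neg, hkey]
        rcases hη with rfl | rfl
        · exact ⟨τ, Or.inr (by funext σ; norm_num)⟩
        · exact ⟨τ, Or.inl (by funext σ; norm_num)⟩
    · rintro x ⟨τ, hx | hx⟩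
      · obtain ⟨η, hη, hkey⟩ := key τ
        rcases hη with rfl | rfl
        · refine ⟨_, ⟨τ, Or.inl rfl⟩, ?_⟩
          rw [hkey, hx]; funext σ; norm_num
        · refine ⟨_, ⟨τ, Or.inr rfl⟩, ?_⟩
          have : (fun σ => -((K.B j)ᵀ σ τ : ℝ)) = -(fun σ => ((K.B j)ᵀ σ τ : ℝ)) := by
            funext σ; simp
          rw [this, map_neg, hkey, hx]; funext σ; norm_num
      · obtain ⟨η, hη, hkey⟩ := key τ
        rcases hη with rfl | rfl
        · refine ⟨_, ⟨τ, Or.inr rfl⟩, ?_⟩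
          have : (fun σ => -((K.B j)ᵀ σ τ : ℝ)) = -(fun σ => ((K.B j)ᵀ σ τ : ℝ)) := by
            funext σ; simp
          rw [this, map_neg, hkey, hx]; funext σ; norm_num
        · refine ⟨_, ⟨τ, Or.inl rfl⟩, ?_⟩
          rw [hkey, hx]; funext σ; norm_num
  have himg' : f2 '' colsPM (K.frg j) = colsPM (K.B j)ᵀ := by
    rw [← himg, Set.image_image]
    simpa [hinv] using Set.image_id (colsPM (K.B j)ᵀ)
  have hspanP := span_symPoly (K.B j)ᵀ
  have hspanQ := span_symPoly (K.frg j)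
  have hmapP : Submodule.map f2 (Submodule.span ℝ (colsPM (K.B j)ᵀ)) =
      Submodule.span ℝ (colsPM (K.frg j)) := by
    rw [Submodule.map_span, himg]
  have hmapQ : Submodule.map f2 (Submodule.span ℝ (colsPM (K.frg j))) =
      Submodule.span ℝ (colsPM (K.B j)ᵀ) := by
    rw [Submodule.map_span, himg']
  have hintf : ∀ x : K.fdex (j+1) → ℝ, intVec x → intVec (f2 x) := by
    intro x hx σ
    obtain ⟨m, hm⟩ := hx σ
    rcases hsgn σ with h | h
    · exact ⟨m, by rw [hf2app, h, hm]; ring⟩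
    · exact ⟨-m, by rw [hf2app, h, hm]; push_cast; ring⟩
  refine ⟨f2.toAffineMap, ?_, ?_, ?_, ?_⟩
  · rw [LinearMap.coe_toAffineMap, hspanP, hspanQ]
    refine ⟨?_, ?_, ?_⟩
    · intro x hx
      rw [← hmapP]
      exact ⟨x, hx, rfl⟩
    · intro x _ y _ hxy
      have := congrArg f2 hxy
      rwa [hinv, hinv] at this
    · intro y hy
      refine ⟨f2 y, ?_, hinv y⟩
      rw [← hmapQ]
      exact ⟨y, hy, rfl⟩
  · show f2 '' symPoly (K.B j)ᵀ = symPoly (K.frg j)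
    rw [symPoly, symPoly, ← LinearMap.coe_toAffineMap, AffineMap.image_convexHull,
      LinearMap.coe_toAffineMap, himg]
  · intro x _ hx
    rw [LinearMap.coe_toAffineMap]
    exact hintf x hx
  · intro y hy hyint
    refine ⟨f2 y, ?_, hintf y hyint, hinv y⟩
    rw [hspanP, ← hmapQ]
    rw [hspanQ] at hy
    exact ⟨y, hy, rfl⟩

end Part2
section Cyc
variable {s : ℕ} [NeZero s]

lemma cyc_cond (r i : Fin s) : ((r : ℕ) = ((i : ℕ) + 1) % s) ↔ r = i + 1 := by
  rw [Fin.ext_iff, Fin.val_add, Fin.val_one', Nat.add_mod_mod]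

lemma cyc_row (t : Fin s → ℝ) (r : Fin s) :
    ∑ i, t i * (cycMat s r i : ℝ) = t (r - 1) - t r := by
  have : ∀ i : Fin s, t i * (cycMat s r i : ℝ) =
      (if i = r - 1 then t i else 0) - (if i = r then t i else 0) := by
    intro i
    rw [cycMat]
    push_cast
    rw [mul_sub]
    congr 1
    · by_cases h : i = r - 1
      · have : r = i + 1 := by rw [h]; rw [sub_add_cancel]
        rw [if_pos ((cyc_cond r i).2 this), if_pos h]; ring
      · have : ¬ r = i + 1 := fun hc => h (by rw [hc]; rw [add_sub_cancel_right])
        rw [if_neg (fun hc => this ((cyc_cond r i).1 hc)), if_neg h]; ring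
    · by_cases h : i = r
      · rw [if_pos (h ▸ rfl), if_pos h]; ring
      · rw [if_neg (fun hc : r = i => h hc.symm), if_neg h]; ring
  rw [Finset.sum_congr rfl fun i _ => this i, Finset.sum_sub_distrib,
    Finset.sum_ite_eq' _ (r - 1) t, Finset.sum_ite_eq' _ r t]
  simp

lemma cyc_sum (r : Fin s) : ∑ i, (cycMat s r i : ℝ) = 0 := by
  have := cyc_row (fun _ => (1 : ℝ)) r
  simpa using this

open Fin.NatCast in
lemma cyc_step {P : Fin s → Prop} (h : ∀ x, P x → P (x + 1)) (i0 : Fin s) (h0 : P i0) :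
    ∀ r, P r := by
  have key : ∀ k : ℕ, P (i0 + (k : Fin s)) := by
    intro k
    induction k with
    | zero => simpa using h0
    | succ k ih =>
      have := h _ ih
      rwa [Nat.cast_add_one, ← add_assoc]
  intro r
  have := key ((r - i0).val)
  rwa [Fin.cast_val_eq_self, add_comm, sub_add_cancel] at this

lemma cyc_kernel (t : Fin s → ℝ) (h : ∀ r, ∑ i, t i * (cycMat s r i : ℝ) = 0)
    (i0 : Fin s) (h0 : t i0 = 0) : ∀ i, t i = 0 := by
  refine cyc_step (fun x hx => ?_) i0 h0
  have := h (x + 1)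
  rw [cyc_row, add_sub_cancel_right] at this
  linarith

lemma cyc_int (t : Fin s → ℝ) (y : Fin s → ℝ) (h : ∀ r, ∑ i, t i * (cycMat s r i : ℝ) = y r)
    (hy : ∀ r, ∃ m : ℤ, y r = m) (i0 : Fin s) : ∀ i, ∃ m : ℤ, t i - t i0 = m := by
  refine cyc_step (fun x hx => ?_) i0 ⟨0, by simp⟩
  obtain ⟨m, hm⟩ := hx
  have := h (x + 1)
  rw [cyc_row, add_sub_cancel_right] at this
  obtain ⟨my, hmy⟩ := hy (x + 1)
  exact ⟨m - my, by push_cast; rw [← hm, ← hmy]; linarith⟩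

end Cyc
lemma sum_split {α M : Type*} [Fintype α] [DecidableEq α] [AddCommMonoid M] (a : α) (f : α → M) :
    ∑ x, f x = f a + ∑ x : {x // x ≠ a}, f x.1 := by
  rw [Fintype.sum_eq_add_sum_compl a f]
  congr 1
  exact Finset.sum_subtype _ (fun x => by rw [Finset.mem_compl, Finset.mem_singleton]) f

section Part1
variable {n j : ℕ} {K : SC n}

set_option maxHeartbeats 2000000 in
lemma part1 (hclosed : ∀ τ : K.fdex j, K.ridgeDeg j τ = 2) (hsc : K.StronglyConnected j)
    (sgn : K.fdex (j+1) → ℝ) (hsgn : ∀ σ, sgn σ = 1 ∨ sgn σ = -1)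
    (hker : ∀ τ : K.fdex j, ∑ σ, (K.B j τ σ : ℝ) * sgn σ = 0)
    {s : ℕ} (hs : Fintype.card (K.fdex (j+1)) = s) (hs1 : 1 ≤ s)
    [Nonempty (K.fdex j)] :
    UniEquiv (symPoly (K.B j)) (symPoly (cycMat s)) := by
  classical
  haveI : NeZero s := ⟨by omega⟩
  haveI : Nonempty (Fin s) := ⟨⟨0, by omega⟩⟩
  haveI hne : Nonempty (K.fdex (j+1)) := Fintype.card_pos_iff.1 (by omega)
  set ord := Fintype.equivFinOfCardEq hs with hord
  set c : K.fdex (j+1) → (K.fdex j → ℝ) := fun σ τ => (K.B j τ σ : ℝ) with hcdef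
  set d : Fin s → (Fin s → ℝ) := fun i r => (cycMat s r i : ℝ) with hddef
  obtain ⟨σ0⟩ := id hne
  set i0 := ord σ0 with hi0
  have hsq : ∀ σ, sgn σ * sgn σ = 1 := fun σ => by
    rcases hsgn σ with h | h <;> rw [h] <;> norm_num
  -- the two defining relations
  have hrel : ∑ σ, sgn σ • c σ = 0 := by
    funext τ
    rw [Finset.sum_apply]
    simp only [Pi.smul_apply, smul_eq_mul, Pi.zero_apply]
    rw [← hker τ]
    exact Finset.sum_congr rfl fun σ _ => mul_comm _ _
  have hdrel : ∑ i, d i = 0 := by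
    funext r
    rw [Finset.sum_apply]
    simpa using cyc_sum (s := s) r
  -- linear independence of the truncated families
  have indc : LinearIndependent ℝ (fun σ' : {σ : K.fdex (j+1) // σ ≠ σ0} => c σ'.1) := by
    rw [Fintype.linearIndependent_iff]
    intro g hg σ'
    set w : K.fdex (j+1) → ℝ := fun σ => if h : σ = σ0 then 0 else g ⟨σ, h⟩ with hwdef
    have hw0 : ∀ τ, ∑ σ, (K.B j τ σ : ℝ) * w σ = 0 := by
      intro τ
      have h2 : ∑ σ, w σ * c σ τ = 0 := by
        rw [sum_split σ0]
        have hgτ := congrFun hg τ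
        rw [Finset.sum_apply] at hgτ
        simp only [Pi.smul_apply, smul_eq_mul, Pi.zero_apply] at hgτ
        have : ∀ σ' : {σ : K.fdex (j+1) // σ ≠ σ0}, w σ'.1 = g σ' := by
          intro σ'; rw [hwdef]; simp [σ'.2]
        rw [show w σ0 = 0 by rw [hwdef]; simp]
        rw [Finset.sum_congr rfl fun σ' _ => by rw [this σ']]
        simpa using hgτ
      rw [← h2]
      exact Finset.sum_congr rfl fun σ _ => mul_comm _ _
    have hzero := zero_prop hclosed hsc w hw0 σ0 (by rw [hwdef]; simp)
    have := hzero σ'.1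
    rw [hwdef] at this
    simpa [σ'.2] using this
  have dind : LinearIndependent ℝ (fun i' : {i : Fin s // i ≠ i0} => d i'.1) := by
    rw [Fintype.linearIndependent_iff]
    intro g hg i'
    set t : Fin s → ℝ := fun i => if h : i = i0 then 0 else g ⟨i, h⟩ with htdef
    have ht0 : ∀ r, ∑ i, t i * (cycMat s r i : ℝ) = 0 := by
      intro r
      have h2 : ∑ i, t i * d i r = 0 := by
        rw [sum_split i0]
        have hgr := congrFun hg r
        rw [Finset.sum_apply] at hgr
        simp only [Pi.smul_apply, smul_eq_mul, Pi.zero_apply] at hgr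
        have : ∀ i' : {i : Fin s // i ≠ i0}, t i'.1 = g i' := by
          intro i'; rw [htdef]; simp [i'.2]
        rw [show t i0 = 0 by rw [htdef]; simp]
        rw [Finset.sum_congr rfl fun i' _ => by rw [this i']]
        simpa using hgr
      exact h2
    have hzero := cyc_kernel t ht0 i0 (by rw [htdef]; simp)
    have := hzero i'.1
    rw [htdef] at this
    simpa [i'.2] using this
  -- the span of the columns
  set V := Submodule.span ℝ (Set.range fun σ' : {σ : K.fdex (j+1) // σ ≠ σ0} => c σ'.1) with hVdef
  have hc0span : c σ0 = (-(sgn σ0)) • ∑ σ' : {σ : K.fdex (j+1) // σ ≠ σ0}, sgn σ'.1 • c σ'.1 := by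
    have h := hrel
    rw [sum_split σ0] at h
    have h2 : sgn σ0 • c σ0 = -∑ σ' : {σ : K.fdex (j+1) // σ ≠ σ0}, sgn σ'.1 • c σ'.1 :=
      eq_neg_of_add_eq_zero_left h
    calc c σ0 = (sgn σ0 * sgn σ0) • c σ0 := by rw [hsq σ0, one_smul]
    _ = sgn σ0 • (sgn σ0 • c σ0) := by rw [smul_smul]
    _ = (-(sgn σ0)) • ∑ σ' : {σ : K.fdex (j+1) // σ ≠ σ0}, sgn σ'.1 • c σ'.1 := by
        rw [h2, smul_neg, neg_smul]
  have hcV : ∀ σ, c σ ∈ V := by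
    intro σ
    by_cases h : σ = σ0
    · rw [h, hc0span]
      exact V.smul_mem _ (Submodule.sum_mem _ fun σ' _ =>
        V.smul_mem _ (Submodule.subset_span ⟨σ', rfl⟩))
    · exact Submodule.subset_span ⟨⟨σ, h⟩, rfl⟩
  have hVP : Submodule.span ℝ (colsPM (K.B j)) = V := by
    apply le_antisymm
    · rw [Submodule.span_le]
      rintro x ⟨σc, hx | hx⟩
      · exact hx ▸ hcV σc
      · have hxe : x = -(c σc) := by rw [hx]; funext τ; simp [hcdef]
        exact hxe ▸ V.neg_mem (hcV σc)
    · rw [Submodule.span_le]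
      rintro x ⟨σ', rfl⟩
      exact Submodule.subset_span ⟨σ'.1, Or.inl rfl⟩
  have hQd : Submodule.span ℝ (colsPM (cycMat s)) = Submodule.span ℝ (Set.range d) := by
    apply le_antisymm
    · rw [Submodule.span_le]
      rintro x ⟨ic, hx | hx⟩
      · exact hx ▸ Submodule.subset_span ⟨ic, rfl⟩
      · have hxe : x = -(d ic) := by rw [hx]; funext r; simp [hddef]
        exact hxe ▸ Submodule.neg_mem _ (Submodule.subset_span ⟨ic, rfl⟩)
    · rw [Submodule.span_le]
      rintro x ⟨ic, rfl⟩
      exact Submodule.subset_span ⟨ic, Or.inl rfl⟩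
  -- basis of V
  have hvind : LinearIndependent ℝ
      (fun σ' : {σ : K.fdex (j+1) // σ ≠ σ0} => (⟨c σ'.1, hcV σ'.1⟩ : V)) :=
    LinearIndependent.of_comp V.subtype indc
  have hvspan : ⊤ ≤ Submodule.span ℝ
      (Set.range fun σ' : {σ : K.fdex (j+1) // σ ≠ σ0} => (⟨c σ'.1, hcV σ'.1⟩ : V)) := by
    have hmapeq : Submodule.map V.subtype (Submodule.span ℝ
        (Set.range fun σ' : {σ : K.fdex (j+1) // σ ≠ σ0} => (⟨c σ'.1, hcV σ'.1⟩ : V))) =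
        Submodule.map V.subtype ⊤ := by
      rw [Submodule.map_span, Submodule.map_subtype_top, ← Set.range_comp]
      rfl
    rw [Submodule.map_injective_of_injective V.injective_subtype hmapeq]
  set bV : Module.Basis {σ : K.fdex (j+1) // σ ≠ σ0} ℝ V := Module.Basis.mk hvind hvspan with hbV
  set tgt : {σ : K.fdex (j+1) // σ ≠ σ0} → (Fin s → ℝ) :=
    fun σ' => sgn σ'.1 • d (ord σ'.1) with htgt
  -- linear independence of the targets
  have tind : LinearIndependent ℝ tgt := by
    set e : {σ : K.fdex (j+1) // σ ≠ σ0} ≃ {i : Fin s // i ≠ i0} :=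
      Equiv.subtypeEquiv ord (fun σ =>
        ⟨fun h hc => h (ord.injective hc), fun h hc => h (congrArg ord hc)⟩) with he
    have comp := dind.comp e e.injective
    set u : {σ : K.fdex (j+1) // σ ≠ σ0} → ℝˣ := fun σ' =>
      if sgn σ'.1 = 1 then 1 else -1 with hu
    have hucoe : ∀ σ', (u σ' : ℝ) = sgn σ'.1 := by
      intro σ'
      rcases hsgn σ'.1 with h | h
      · rw [hu]; simp [h]
      · rw [hu]; simp [h]; norm_num
    have : tgt = u • (fun σ' : {σ : K.fdex (j+1) // σ ≠ σ0} => d ((e σ').1)) := by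
      funext σ'
      rw [htgt]
      show sgn σ'.1 • d (ord σ'.1) = u σ' • d ((e σ').1)
      rw [Units.smul_def, hucoe]
      rfl
    rw [this]
    exact comp.units_smul u
  set L0 : V →ₗ[ℝ] (Fin s → ℝ) := bV.constr ℝ tgt with hL0
  have hL0b : ∀ σ', L0 (bV σ') = tgt σ' := fun σ' => Module.Basis.constr_basis bV ℝ tgt σ'
  have hKey : ∀ y : V, L0 y = ∑ σ', bV.repr y σ' • tgt σ' := by
    intro y
    calc L0 y = L0 (∑ σ', bV.repr y σ' • bV σ') := by rw [bV.sum_repr]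
    _ = ∑ σ', L0 (bV.repr y σ' • bV σ') := map_sum L0 _ _
    _ = ∑ σ', bV.repr y σ' • tgt σ' :=
        Finset.sum_congr rfl fun σ' _ => by rw [_root_.map_smul, hL0b]
  have hL0inj : Function.Injective L0 := by
    rw [injective_iff_map_eq_zero]
    intro x hx
    rw [hKey] at hx
    have hzero := Fintype.linearIndependent_iff.1 tind _ hx
    calc x = ∑ σ', bV.repr x σ' • bV σ' := (bV.sum_repr x).symm
    _ = ∑ σ' : {σ : K.fdex (j+1) // σ ≠ σ0}, (0 : ↥V) :=
        Finset.sum_congr rfl fun σ' _ => by rw [hzero σ', zero_smul]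
    _ = 0 := by simp
  obtain ⟨W, hW⟩ := Submodule.exists_isCompl V
  set L : (K.fdex j → ℝ) →ₗ[ℝ] (Fin s → ℝ) := L0.comp (V.linearProjOfIsCompl W hW) with hL
  have hLmem : ∀ (x : K.fdex j → ℝ) (hx : x ∈ V), L x = L0 ⟨x, hx⟩ := by
    intro x hx
    have h2 : (V.linearProjOfIsCompl W hW) x = ⟨x, hx⟩ :=
      Submodule.linearProjOfIsCompl_apply_left hW ⟨x, hx⟩
    rw [hL, LinearMap.comp_apply, h2]
  -- the key computation
  have hLc : ∀ σ, L (c σ) = sgn σ • d (ord σ) := by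
    intro σ
    by_cases h : σ = σ0
    · rw [h]
      rw [hLmem _ (hcV σ0)]
      have hx : (⟨c σ0, hcV σ0⟩ : V) =
          (-(sgn σ0)) • ∑ σ' : {σ : K.fdex (j+1) // σ ≠ σ0}, sgn σ'.1 • bV σ' := by
        apply Subtype.ext
        show c σ0 = V.subtype ((-(sgn σ0)) • ∑ σ' : {σ : K.fdex (j+1) // σ ≠ σ0}, sgn σ'.1 • bV σ')
        rw [_root_.map_smul, map_sum, hc0span]
        congr 1
        refine Finset.sum_congr rfl fun σ' _ => ?_
        rw [_root_.map_smul]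
        congr 1
        show c σ'.1 = ((bV σ' : V) : K.fdex j → ℝ)
        rw [hbV, Module.Basis.mk_apply]
      rw [hx, _root_.map_smul, map_sum]
      rw [Finset.sum_congr rfl fun σ' _ => by
        rw [_root_.map_smul, hL0b, htgt, smul_smul, hsq, one_smul]]
      have hsum : ∑ σ' : {σ : K.fdex (j+1) // σ ≠ σ0}, d (ord σ'.1) =
          ∑ i' : {i : Fin s // i ≠ i0}, d i'.1 := by
        set e : {σ : K.fdex (j+1) // σ ≠ σ0} ≃ {i : Fin s // i ≠ i0} :=
          Equiv.subtypeEquiv ord (fun σ =>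
            ⟨fun h hc => h (ord.injective hc), fun h hc => h (congrArg ord hc)⟩) with he
        exact Equiv.sum_comp e (fun i' => d i'.1)
      rw [hsum]
      have hd0 : ∑ i' : {i : Fin s // i ≠ i0}, d i'.1 = -(d i0) := by
        have h := hdrel
        rw [sum_split i0] at h
        exact eq_neg_of_add_eq_zero_right h
      rw [hd0, smul_neg, neg_smul, neg_neg]
    · rw [hLmem _ (hcV σ)]
      have hx : (⟨c σ, hcV σ⟩ : V) = bV ⟨σ, h⟩ := by
        apply Subtype.ext
        rw [hbV, Module.Basis.mk_apply]
      rw [hx, hL0b]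
  -- image of the generators
  have himg : ⇑L '' colsPM (K.B j) = colsPM (cycMat s) := by
    apply Set.Subset.antisymm
    · rintro x ⟨y, ⟨σc, hy | hy⟩, rfl⟩
      · have hyc : y = c σc := hy
        rw [hyc, hLc]
        rcases hsgn σc with hc' | hc'
        · exact ⟨ord σc, Or.inl (by funext r; rw [hc', one_smul])⟩
        · exact ⟨ord σc, Or.inr (by funext r; rw [hc']; simp [hddef])⟩
      · have hyc : y = -(c σc) := by rw [hy]; funext τ; simp [hcdef]
        rw [hyc, map_neg, hLc]
        rcases hsgn σc with hc' | hc'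
        · exact ⟨ord σc, Or.inr (by funext r; rw [hc']; simp [hddef])⟩
        · exact ⟨ord σc, Or.inl (by funext r; rw [hc']; simp [hddef])⟩
    · rintro x ⟨ic, hx | hx⟩
      · rcases hsgn (ord.symm ic) with hc' | hc'
        · refine ⟨c (ord.symm ic), ⟨ord.symm ic, Or.inl rfl⟩, ?_⟩
          rw [hLc, hc', one_smul, Equiv.apply_symm_apply, hx]
        · refine ⟨-(c (ord.symm ic)), ⟨ord.symm ic, Or.inr (by funext τ; simp [hcdef])⟩, ?_⟩
          rw [map_neg, hLc, hc', Equiv.apply_symm_apply, hx]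
          funext r; simp [hddef]
      · rcases hsgn (ord.symm ic) with hc' | hc'
        · refine ⟨-(c (ord.symm ic)), ⟨ord.symm ic, Or.inr (by funext τ; simp [hcdef])⟩, ?_⟩
          rw [map_neg, hLc, hc', one_smul, Equiv.apply_symm_apply, hx]
          funext r; simp [hddef]
        · refine ⟨c (ord.symm ic), ⟨ord.symm ic, Or.inl rfl⟩, ?_⟩
          rw [hLc, hc', Equiv.apply_symm_apply, hx]
          funext r; simp [hddef]
  have hmap : Submodule.map L (Submodule.span ℝ (colsPM (K.B j))) =
      Submodule.span ℝ (colsPM (cycMat s)) := by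
    rw [Submodule.map_span, himg]
  have hspanP := span_symPoly (K.B j)
  have hspanQ := span_symPoly (cycMat s)
  refine ⟨L.toAffineMap, ?_, ?_, ?_, ?_⟩
  · rw [LinearMap.coe_toAffineMap, hspanP, hspanQ]
    refine ⟨fun x hx => ?_, fun x hx y hy hxy => ?_, fun y hy => ?_⟩
    · rw [← hmap]
      exact ⟨x, hx, rfl⟩
    · rw [SetLike.mem_coe, hVP] at hx hy
      rw [hLmem x hx, hLmem y hy] at hxy
      exact congrArg Subtype.val (hL0inj hxy)
    · rw [SetLike.mem_coe, ← hmap] at hy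
      obtain ⟨x, hx, rfl⟩ := hy
      exact ⟨x, hx, rfl⟩
  · show ⇑L '' symPoly (K.B j) = symPoly (cycMat s)
    rw [symPoly, symPoly, ← LinearMap.coe_toAffineMap, AffineMap.image_convexHull,
      LinearMap.coe_toAffineMap, himg]
  · intro x hx hxint
    rw [LinearMap.coe_toAffineMap]
    rw [hspanP, SetLike.mem_coe, hVP] at hx
    have hx' : x ∈ Submodule.span ℝ (Set.range c) := by
      refine Submodule.span_mono ?_ hx
      rintro y ⟨σ', rfl⟩
      exact ⟨σ'.1, rfl⟩
    obtain ⟨a, ha⟩ := (Submodule.mem_span_range_iff_exists_fun ℝ).1 hx'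
    set a' : K.fdex (j+1) → ℝ := fun σ => a σ - (a σ0 * sgn σ0) * sgn σ with ha'def
    have ha' : ∑ σ, a' σ • c σ = x := by
      have hexp : ∑ σ, a' σ • c σ =
          (∑ σ, a σ • c σ) - (a σ0 * sgn σ0) • ∑ σ, sgn σ • c σ := by
        rw [Finset.smul_sum, ← Finset.sum_sub_distrib]
        refine Finset.sum_congr rfl fun σ _ => ?_
        rw [ha'def, smul_smul, sub_smul]
      rw [hexp, hrel, smul_zero, sub_zero, ha]
    have hrows : ∀ τ, ∑ σ, (K.B j τ σ : ℝ) * a' σ = x τ := by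
      intro τ
      have h2 := congrFun ha' τ
      rw [Finset.sum_apply] at h2
      rw [← h2]
      exact Finset.sum_congr rfl fun σ _ => by rw [Pi.smul_apply, smul_eq_mul, mul_comm]
    have hint : ∀ τ : K.fdex j, ∃ m : ℤ, ∑ σ, (K.B j τ σ : ℝ) * a' σ = m := by
      intro τ; rw [hrows τ]; exact hxint τ
    have ha'0 : a' σ0 = 0 := by
      rw [ha'def]
      show a σ0 - a σ0 * sgn σ0 * sgn σ0 = 0
      rw [mul_assoc, hsq σ0, mul_one, sub_self]
    have haint := int_prop hclosed hsc a' hint σ0 ⟨0, by rw [ha'0]; norm_num⟩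
    have hMex : ∀ σ, ∃ mm : ℤ, a' σ * sgn σ = mm := by
      intro σ
      obtain ⟨m, hm⟩ := haint σ
      rcases hsgn σ with hc' | hc'
      · exact ⟨m, by rw [hc', hm, mul_one]⟩
      · exact ⟨-m, by rw [hc', hm]; push_cast; ring⟩
    choose M hMs using hMex
    have hLx : L x = ∑ σ, (M σ : ℝ) • d (ord σ) := by
      rw [← ha', map_sum]
      refine Finset.sum_congr rfl fun σ _ => ?_
      rw [_root_.map_smul, hLc, smul_smul, ← hMs σ]
    intro r
    refine ⟨∑ σ, M σ * cycMat s r (ord σ), ?_⟩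
    rw [hLx, Finset.sum_apply]
    push_cast
    exact Finset.sum_congr rfl fun σ _ => by rw [Pi.smul_apply, smul_eq_mul]
  · intro y hy hyint
    rw [hspanQ, SetLike.mem_coe, hQd] at hy
    obtain ⟨t, ht⟩ := (Submodule.mem_span_range_iff_exists_fun ℝ).1 hy
    have hrows : ∀ r, ∑ i, t i * (cycMat s r i : ℝ) = y r := by
      intro r
      have h2 := congrFun ht r
      rw [Finset.sum_apply] at h2
      rw [← h2]
      exact Finset.sum_congr rfl fun i _ => by rw [Pi.smul_apply, smul_eq_mul]
    have hti := cyc_int t y hrows hyint i0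
    choose m hm using hti
    have hMx : ∀ σ, ∃ mm : ℤ, (m (ord σ) : ℝ) * sgn σ = mm := by
      intro σ
      rcases hsgn σ with hc' | hc'
      · exact ⟨m (ord σ), by rw [hc', mul_one]⟩
      · exact ⟨-(m (ord σ)), by rw [hc']; push_cast; ring⟩
    choose M hMs using hMx
    set x : K.fdex j → ℝ := ∑ σ, ((m (ord σ) : ℝ) * sgn σ) • c σ with hxdef
    refine ⟨x, ?_, ?_, ?_⟩
    · rw [hspanP, SetLike.mem_coe]
      exact Submodule.sum_mem _ fun σ _ => Submodule.smul_mem _ _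
        (Submodule.subset_span ⟨σ, Or.inl rfl⟩)
    · intro τ
      refine ⟨∑ σ, M σ * K.B j τ σ, ?_⟩
      rw [hxdef, Finset.sum_apply]
      push_cast
      refine Finset.sum_congr rfl fun σ _ => ?_
      rw [Pi.smul_apply, smul_eq_mul, hMs σ]
    · rw [LinearMap.coe_toAffineMap, hxdef, map_sum]
      have hterm : ∀ σ, L (((m (ord σ) : ℝ) * sgn σ) • c σ) = (m (ord σ) : ℝ) • d (ord σ) := by
        intro σ
        rw [_root_.map_smul, hLc, smul_smul, mul_assoc, hsq σ, mul_one]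
      rw [Finset.sum_congr rfl fun σ _ => hterm σ]
      calc ∑ σ, (m (ord σ) : ℝ) • d (ord σ) = ∑ i, (m i : ℝ) • d i :=
            Equiv.sum_comp ord (fun i => (m i : ℝ) • d i)
      _ = ∑ i, (t i - t i0) • d i := Finset.sum_congr rfl fun i _ => by rw [← hm i]
      _ = (∑ i, t i • d i) - t i0 • ∑ i, d i := by
            rw [Finset.smul_sum, ← Finset.sum_sub_distrib]
            exact Finset.sum_congr rfl fun i _ => by rw [sub_smul]
      _ = y := by rw [hdrel, smul_zero, sub_zero, ht]

end Part1

set_option maxHeartbeats 1000000 in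
/-- Let `Δ` be a `d`-dimensional (`d = j+1 ≥ 1`) orientable
pseudomanifold without boundary with `s` facets and facet-ridge graph `G` (with signed
incidence matrix `K.frg j`). Then `P_Δ` is unimodularly equivalent to the symmetric
edge polytope of the cycle `C_s`, and `P^Δ` is unimodularly equivalent to the
symmetric edge polytope of `G`. -/
theorem stmt17 (n j s : ℕ) (K : SC n) (hdim : K.dimIs (j + 1)) (hpure : K.pure (j + 1))
    (hsc : K.StronglyConnected j)
    (hclosed : ∀ τ : K.fdex j, K.ridgeDeg j τ = 2)
    (horient : ∃ z : K.fdex (j + 1) → ℤ, z ≠ 0 ∧ (K.B j).mulVec z = 0 ∧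
      ∀ w : K.fdex (j + 1) → ℤ, (K.B j).mulVec w = 0 → ∃ c : ℤ, w = c • z)
    (hs : Fintype.card (K.fdex (j + 1)) = s) :
    UniEquiv (symPoly (K.B j)) (symPoly (cycMat s)) ∧
      UniEquiv (symPoly (K.B j)ᵀ) (symPoly (K.frg j)) := by
  classical
  obtain ⟨z, hz0, hzv, -⟩ := horient
  -- nonemptiness of facets and ridges
  obtain ⟨σf, hσf, hσfcard⟩ := hdim.2
  haveI hneF : Nonempty (K.fdex (j+1)) := ⟨⟨σf, hσf, hσfcard⟩⟩
  obtain ⟨τ0set, hτ0sub, hτ0card⟩ :=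
    Finset.exists_subset_card_eq (s := σf) (n := j+1) (by rw [hσfcard]; omega)
  have hτ0mem : τ0set ∈ K.faces :=
    K.down_closed σf hσf τ0set hτ0sub (Finset.card_pos.1 (by rw [hτ0card]; omega))
  haveI hneR : Nonempty (K.fdex j) := ⟨⟨τ0set, hτ0mem, hτ0card⟩⟩
  have hs1 : 1 ≤ s := by rw [← hs]; exact Fintype.card_pos
  -- the kernel vector, over `ℝ`
  have hkerZ : ∀ τ : K.fdex j, ∑ σ, K.B j τ σ * z σ = 0 := by
    intro τ
    simpa [Matrix.mulVec, dotProduct] using congrFun hzv τ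
  set ζ : K.fdex (j+1) → ℝ := fun σ => (z σ : ℝ) with hζdef
  have hkerR : ∀ τ : K.fdex j, ∑ σ, (K.B j τ σ : ℝ) * ζ σ = 0 := by
    intro τ
    have h := hkerZ τ
    have h2 : ((∑ σ, K.B j τ σ * z σ : ℤ) : ℝ) = 0 := by rw [h]; simp
    push_cast at h2
    exact h2
  obtain ⟨σ1, hσ1⟩ : ∃ σ, z σ ≠ 0 := by
    by_contra h
    push_neg at h
    exact hz0 (funext h)
  have habs := abs_const hclosed hsc ζ hkerR σ1
  have hNpos : 0 < |ζ σ1| := abs_pos.2 (by show (z σ1 : ℝ) ≠ 0; exact_mod_cast hσ1)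
  set N : ℝ := |ζ σ1| with hNdef
  -- the sign vector
  set sgn : K.fdex (j+1) → ℝ := fun σ => if 0 < ζ σ then 1 else -1 with hsgndef
  have hsgn : ∀ σ, sgn σ = 1 ∨ sgn σ = -1 := by
    intro σ
    by_cases h : 0 < ζ σ
    · exact Or.inl (by show (if 0 < ζ σ then (1:ℝ) else -1) = 1; rw [if_pos h])
    · exact Or.inr (by show (if 0 < ζ σ then (1:ℝ) else -1) = -1; rw [if_neg h])
  have hval : ∀ σ, ζ σ = N * sgn σ := by
    intro σ
    have habsσ := habs σ
    have hζne : ζ σ ≠ 0 := by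
      intro hc
      rw [hc] at habsσ
      simp at habsσ
      exact hNpos.ne' habsσ.symm
    show ζ σ = N * (if 0 < ζ σ then (1:ℝ) else -1)
    by_cases h : 0 < ζ σ
    · rw [if_pos h, mul_one, ← habsσ, abs_of_pos h]
    · have hlt : ζ σ < 0 := lt_of_le_of_ne (not_lt.1 h) hζne
      rw [if_neg h, ← habsσ, abs_of_neg hlt]
      ring
  have hkerS : ∀ τ : K.fdex j, ∑ σ, (K.B j τ σ : ℝ) * sgn σ = 0 := by
    intro τ
    have h2 : ∑ σ, (K.B j τ σ : ℝ) * (N * sgn σ) = 0 := by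
      rw [Finset.sum_congr rfl fun σ _ => by rw [← hval σ]]
      exact hkerR τ
    have h3 : N * ∑ σ, (K.B j τ σ : ℝ) * sgn σ = 0 := by
      rw [Finset.mul_sum, ← h2]
      exact Finset.sum_congr rfl fun σ _ => by ring
    rcases mul_eq_zero.1 h3 with h | h
    · exact absurd h hNpos.ne'
    · exact h
  constructor
  · exact part1 hclosed hsc sgn hsgn hkerS hs hs1
  · have hrow : ∀ (τ : K.fdex j) (σa σb : K.fdex (j+1)), τ.1 ⊆ σa.1 → τ.1 ⊆ σb.1 → σa ≠ σb →
        sgn σa * (bEntry τ.1 σa.1 : ℝ) + sgn σb * (bEntry τ.1 σb.1 : ℝ) = 0 := by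
      intro τ σa σb ha hb hne'
      have h := row_two hclosed τ ha hb hne' sgn
      rw [hkerS τ] at h
      linarith [h]
    exact part2 hclosed sgn hsgn hrow
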